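/- Let G = K_{1,m} with m ≥ 3, and let H be a graph in which every vertex has degree at least 1. Then Γ(G □ H) > |V(H)|. -/

import Mathlib

open SimpleGraph

variable {V : Type*} {W : Type*}

/-- `D` is a dominating set of `G`: every vertex outside `D` has a neighbor in `D`. -/
def IsDomSet (G : SimpleGraph V) (D : Set V) : Prop :=
  ∀ v ∉ D, ∃ u ∈ D, G.Adj u v

/-- `D` is a minimal dominating set: dominating, and no proper subset is dominating. -/
def IsMinDomSet (G : SimpleGraph V) (D : Set V) : Prop :=
  IsDomSet G D ∧ ∀ D' ⊂ D, ¬ IsDomSet G D'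

/-- The upper domination number `Γ(G)`: maximum size of a minimal dominating set. -/
noncomputable def upperDom (G : SimpleGraph V) : ℕ :=
  sSup {n | ∃ D : Set V, IsMinDomSet G D ∧ D.ncard = n}

/-- The domination number `γ(G)`: minimum size of a dominating set. -/
noncomputable def domNum (G : SimpleGraph V) : ℕ :=
  sInf {n | ∃ D : Set V, IsDomSet G D ∧ D.ncard = n}

/-- The set of vertices of `D` having a private `D`-neighbor. -/
def privSet (G : SimpleGraph V) (D : Set V) : Set V :=
  {v ∈ D | ∃ u, u ∉ D ∧ G.Adj v u ∧ ∀ w ∈ D, G.Adj w u → w = v}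

/-- `I` is an independent set of `G`. -/
def IsIndep (G : SimpleGraph V) (I : Set V) : Prop :=
  ∀ u ∈ I, ∀ v ∈ I, ¬ G.Adj u v

/-- `I` is a maximal independent set of `G`. -/
def IsMaxIndep (G : SimpleGraph V) (I : Set V) : Prop :=
  IsIndep G I ∧ ∀ J, IsIndep G J → I ⊆ J → J = I

/-- The independence number `α(G)`. -/
noncomputable def indepNum (G : SimpleGraph V) : ℕ :=
  sSup {n | ∃ I : Set V, IsIndep G I ∧ I.ncard = n}

/-- The star `K_{1,n}` on `Fin (n+1)` with center `0`. -/
def starGraph (n : ℕ) : SimpleGraph (Fin (n + 1)) :=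
  SimpleGraph.fromRel (fun i _ => i = 0)

/-- The graph `X_n`: two copies of `K_{n+1}` (on `u_0,…,u_n` and `v_0,…,v_n`)
joined by the matching edges `u_i v_i` for `i ≠ 0`. -/
def Xgraph (n : ℕ) : SimpleGraph (Fin (n + 1) ⊕ Fin (n + 1)) :=
  SimpleGraph.fromRel (fun x y => match x, y with
    | .inl _, .inl _ => True
    | .inr _, .inr _ => True
    | .inl i, .inr j => i = j ∧ i ≠ 0
    | _, _ => False)

/-- The graph `X_n'`: `X_n` with `u_0` deleted.  Vertices `inl i` represent
`u_{i+1}` (`i : Fin n`) and `inr j` represent `v_j` (`j : Fin (n+1)`); each side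
induces a complete graph and `u_{i+1}` is matched to `v_{i+1}`. -/
def Xgraph' (n : ℕ) : SimpleGraph (Fin n ⊕ Fin (n + 1)) :=
  SimpleGraph.fromRel (fun x y => match x, y with
    | .inl _, .inl _ => True
    | .inr _, .inr _ => True
    | .inl i, .inr j => (j : ℕ) = (i : ℕ) + 1
    | _, _ => False)


section Aux
variable {V : Type*}

lemma exists_isMinDomSet [Finite V] (G : SimpleGraph V) : ∃ D, IsMinDomSet G D := by
  have key : ∀ n (D : Set V), IsDomSet G D → D.ncard ≤ n → ∃ D', IsMinDomSet G D' := by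
    intro n
    induction n with
    | zero =>
      intro D hD hc
      refine ⟨D, hD, ?_⟩
      intro D' hsub
      have hD0 : D = ∅ := by
        have := Set.ncard_eq_zero (Set.toFinite D)
        exact this.mp (Nat.le_zero.mp hc)
      rw [hD0] at hsub
      exact absurd hsub (by simp [Set.ssubset_def])
    | succ n ih =>
      intro D hD hc
      by_cases h : ∀ D' ⊂ D, ¬ IsDomSet G D'
      · exact ⟨D, hD, h⟩
      · push_neg at h
        obtain ⟨D', hsub, hD'⟩ := h
        refine ih D' hD' ?_
        have := Set.ncard_lt_ncard hsub (Set.toFinite D)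
        omega
  exact key (Set.univ : Set V).ncard Set.univ (fun v hv => absurd (Set.mem_univ v) hv) le_rfl

/-- Every vertex of a minimal dominating set has a private neighbor. -/
lemma min_priv {G : SimpleGraph V} {D : Set V} (hD : IsMinDomSet G D) {d : V} (hd : d ∈ D) :
    (∀ u ∈ D, ¬ G.Adj u d) ∨ ∃ x, x ∉ D ∧ G.Adj d x ∧ ∀ u ∈ D, G.Adj u x → u = d := by
  have hnd : ¬ IsDomSet G (D \ {d}) := hD.2 _ (by
    constructor
    · exact Set.diff_subset
    · intro hsub
      exact (hsub hd).2 rfl)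
  rw [IsDomSet] at hnd
  push_neg at hnd
  obtain ⟨x, hx, hxno⟩ := hnd
  by_cases hxd : x = d
  · left
    intro u hu hadj
    subst hxd
    rcases eq_or_ne u x with rfl | hne
    · exact G.irrefl hadj
    · exact hxno u ⟨hu, hne⟩ hadj
  · right
    have hxD : x ∉ D := fun h => hx ⟨h, hxd⟩
    obtain ⟨u, hu, hadj⟩ := hD.1 x hxD
    have hud : u = d := by
      by_contra hne
      exact hxno u ⟨hu, hne⟩ hadj
    subst hud
    refine ⟨x, hxD, hadj, ?_⟩
    intro w hw hwadj
    by_contra hne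
    exact hxno w ⟨hw, hne⟩ hwadj

end Aux

theorem stmt_12 [Fintype W] [Nonempty W] (m : ℕ) (hm : 3 ≤ m) (H : SimpleGraph W)
    (hH : ∀ v : W, ∃ w, H.Adj v w) :
    upperDom ((_root_.starGraph m).boxProd H) > Fintype.card W := by
  classical
  obtain ⟨Dh, hDh⟩ := exists_isMinDomSet H
  -- Dh is nonempty
  have hne : Dh.Nonempty := by
    by_contra h
    rw [Set.not_nonempty_iff_eq_empty] at h
    obtain ⟨v⟩ := (inferInstance : Nonempty W)
    obtain ⟨u, hu, -⟩ := hDh.1 v (by simp [h])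
    simp [h] at hu
  obtain ⟨d0, hd0⟩ := hne
  -- named vertices of the star
  set um : Fin (m + 1) := ⟨m, by omega⟩ with hum
  set a1 : Fin (m + 1) := ⟨1, by omega⟩ with ha1
  set a2 : Fin (m + 1) := ⟨2, by omega⟩ with ha2
  have hum0 : um ≠ (0 : Fin (m+1)) := fun h => by
    have h' := congrArg Fin.val h; simp [hum] at h'; omega
  have ha10 : a1 ≠ (0 : Fin (m+1)) := fun h => by
    have h' := congrArg Fin.val h; simp [ha1] at h'
  have ha20 : a2 ≠ (0 : Fin (m+1)) := fun h => by
    have h' := congrArg Fin.val h; simp [ha2] at h'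
  have ha1um : a1 ≠ um := fun h => by
    have h' := congrArg Fin.val h; simp [ha1, hum] at h'; omega
  have ha2um : a2 ≠ um := fun h => by
    have h' := congrArg Fin.val h; simp [ha2, hum] at h'; omega
  have ha12 : a1 ≠ a2 := fun h => by
    have h' := congrArg Fin.val h; simp [ha1, ha2] at h' 
  -- star adjacency
  have star_adj : ∀ a b : Fin (m+1), (_root_.starGraph m).Adj a b ↔ a ≠ b ∧ (a = 0 ∨ b = 0) := by
    intro a b
    simp [_root_.starGraph, SimpleGraph.fromRel_adj]
  -- the candidate minimal dominating set
  set D : Set (Fin (m + 1) × W) :=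
    {p | (p.1 = um ∧ p.2 ∉ Dh) ∨ (p.1 ≠ 0 ∧ p.1 ≠ um ∧ p.2 ∈ Dh)} with hD
  -- every vertex of Dh has a neighbor outside Dh
  have hout : ∀ d ∈ Dh, ∃ x, x ∉ Dh ∧ H.Adj d x := by
    intro d hd
    rcases min_priv hDh hd with h | ⟨x, hx, hadj, -⟩
    · obtain ⟨w, hw⟩ := hH d
      refine ⟨w, ?_, hw⟩
      intro hwD
      exact h w hwD hw.symm
    · exact ⟨x, hx, hadj⟩
  -- D is dominating
  have hdom : IsDomSet ((_root_.starGraph m).boxProd H) D := by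
    rintro ⟨a, w⟩ hvD
    by_cases ha0 : a = 0
    · subst ha0
      by_cases hw : w ∈ Dh
      · refine ⟨(a1, w), Or.inr ⟨ha10, ha1um, hw⟩, ?_⟩
        exact (SimpleGraph.boxProd_adj).mpr (Or.inl ⟨(star_adj a1 0).mpr ⟨ha10, Or.inr rfl⟩, rfl⟩)
      · refine ⟨(um, w), Or.inl ⟨rfl, hw⟩, ?_⟩
        exact (SimpleGraph.boxProd_adj).mpr (Or.inl ⟨(star_adj um 0).mpr ⟨hum0, Or.inr rfl⟩, rfl⟩)
    · by_cases haum : a = um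
      · subst haum
        have hw : w ∈ Dh := by
          by_contra hw
          exact hvD (Or.inl ⟨rfl, hw⟩)
        obtain ⟨x, hx, hadj⟩ := hout w hw
        refine ⟨(um, x), Or.inl ⟨rfl, hx⟩, ?_⟩
        exact (SimpleGraph.boxProd_adj).mpr (Or.inr ⟨hadj.symm, rfl⟩)
      · have hw : w ∉ Dh := by
          intro hw
          exact hvD (Or.inr ⟨ha0, haum, hw⟩)
        obtain ⟨u, hu, hadj⟩ := hDh.1 w hw
        exact ⟨(a, u), Or.inr ⟨ha0, haum, hu⟩, (SimpleGraph.boxProd_adj).mpr (Or.inr ⟨hadj, rfl⟩)⟩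
  -- D is minimal
  have hmin : IsMinDomSet ((_root_.starGraph m).boxProd H) D := by
    refine ⟨hdom, ?_⟩
    intro D' hsub hdom'
    obtain ⟨v, hvD, hvD'⟩ := Set.exists_of_ssubset hsub
    obtain ⟨a, w⟩ := v
    rcases hvD with ⟨haum, hw⟩ | ⟨ha0, haum, hw⟩
    · -- v = (um, w), w ∉ Dh; private neighbor (0, w)
      subst haum
      have hx : ((0 : Fin (m+1)), w) ∉ D' := by
        intro h
        rcases hsub.1 h with ⟨h1, -⟩ | ⟨h1, -⟩
        · exact hum0 h1.symm
        · exact h1 rfl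
      obtain ⟨⟨b, w'⟩, hu, hadj⟩ := hdom' _ hx
      have huD := hsub.1 hu
      rw [SimpleGraph.boxProd_adj] at hadj
      rcases hadj with ⟨hadjG, hweq⟩ | ⟨hadjH, hbeq⟩
      · simp only at hweq; subst hweq
        rcases huD with ⟨h1, h2⟩ | ⟨h1, h2, h3⟩
        · exact hvD' (by rwa [← h1])
        · rcases (star_adj b 0).mp hadjG with ⟨-, hb | hb⟩
          · exact h1 hb
          · exact hw h3
      · simp only at hbeq; subst hbeq
        rcases huD with ⟨h1, -⟩ | ⟨h1, -⟩
        · exact hum0 h1.symm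
        · exact h1 rfl
    · -- v = (a, w), a leaf ≠ um, w ∈ Dh
      rcases min_priv hDh hw with hpriv | ⟨x, hxD, hadjx, hxuniq⟩
      · -- (a, w) is its own private neighbor
        obtain ⟨⟨b, w'⟩, hu, hadj⟩ := hdom' _ hvD'
        have huD := hsub.1 hu
        rw [SimpleGraph.boxProd_adj] at hadj
        rcases hadj with ⟨hadjG, hweq⟩ | ⟨hadjH, hbeq⟩
        · simp only at hweq; subst hweq
          rcases (star_adj b a).mp hadjG with ⟨-, hb | hb⟩
          · rcases huD with ⟨h1, -⟩ | ⟨h1, -⟩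
            · exact hum0 (hb ▸ h1).symm
            · exact h1 hb
          · exact ha0 hb
        · simp only at hbeq; subst hbeq
          rcases huD with ⟨h1, -⟩ | ⟨-, -, h3⟩
          · exact haum h1
          · exact hpriv w' h3 hadjH
      · -- private neighbor (a, x)
        have hxD' : (a, x) ∉ D' := by
          intro h
          rcases hsub.1 h with ⟨h1, -⟩ | ⟨-, -, h3⟩
          · exact haum h1
          · exact hxD h3
        obtain ⟨⟨b, x'⟩, hu, hadj⟩ := hdom' _ hxD'
        have huD := hsub.1 hu
        rw [SimpleGraph.boxProd_adj] at hadj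
        rcases hadj with ⟨hadjG, hxeq⟩ | ⟨hadjH, hbeq⟩
        · simp only at hxeq; subst hxeq
          rcases (star_adj b a).mp hadjG with ⟨-, hb | hb⟩
          · rcases huD with ⟨h1, -⟩ | ⟨h1, -⟩
            · exact hum0 (hb ▸ h1).symm
            · exact h1 hb
          · exact ha0 hb
        · simp only at hbeq; subst hbeq
          rcases huD with ⟨h1, -⟩ | ⟨-, -, h3⟩
          · exact haum h1
          · have := hxuniq x' h3 hadjH
            subst this
            exact hvD' hu
  -- cardinality bound: |D| ≥ |W| + 1
  have hcard : Fintype.card W + 1 ≤ D.ncard := by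
    set φ : W → Fin (m + 1) × W := fun w => if w ∈ Dh then (a1, w) else (um, w) with hφ
    have hinj : Function.Injective φ := by
      intro x y hxy
      by_cases hx : x ∈ Dh <;> by_cases hy : y ∈ Dh <;>
        simp [hφ, hx, hy, Prod.ext_iff] at hxy <;> tauto
    have hrange : Set.range φ ⊆ D := by
      rintro p ⟨w, rfl⟩
      by_cases hw : w ∈ Dh
      · simp only [hφ, if_pos hw]
        exact Or.inr ⟨ha10, ha1um, hw⟩
      · simp only [hφ, if_neg hw]
        exact Or.inl ⟨rfl, hw⟩
    have hnotin : (a2, d0) ∉ Set.range φ := by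
      rintro ⟨w, hweq⟩
      by_cases hw : w ∈ Dh <;> simp [hφ, hw, Prod.ext_iff] at hweq
      · exact ha12 hweq.1
      · exact ha2um hweq.1.symm
    have hins : insert ((a2, d0)) (Set.range φ) ⊆ D := by
      rw [Set.insert_subset_iff]
      exact ⟨Or.inr ⟨ha20, ha2um, hd0⟩, hrange⟩
    have h1 : (insert ((a2, d0)) (Set.range φ)).ncard = (Set.range φ).ncard + 1 :=
      Set.ncard_insert_of_notMem hnotin (Set.toFinite _)
    have h2 : (Set.range φ).ncard = Fintype.card W := by
      rw [← Nat.card_coe_set_eq, Nat.card_range_of_injective hinj, Nat.card_eq_fintype_card]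
    have h3 := Set.ncard_le_ncard hins (Set.toFinite D)
    omega
  -- conclude
  have hmem : D.ncard ∈ {n | ∃ E : Set (Fin (m+1) × W), IsMinDomSet ((_root_.starGraph m).boxProd H) E ∧ E.ncard = n} :=
    ⟨D, hmin, rfl⟩
  have hbdd : BddAbove {n | ∃ E : Set (Fin (m+1) × W), IsMinDomSet ((_root_.starGraph m).boxProd H) E ∧ E.ncard = n} := by
    refine ⟨Nat.card (Fin (m+1) × W), ?_⟩
    rintro n ⟨E, -, rfl⟩
    have := Set.ncard_le_ncard (Set.subset_univ E) (Set.toFinite _)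
    simpa [Set.ncard_univ] using this
  have : D.ncard ≤ upperDom ((_root_.starGraph m).boxProd H) := le_csSup hbdd hmem
  omega
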